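/- Fix N ≥ 1 and a measurable space Z, and let Ω = Z^N. If f : Ω → [0,∞] is measurable with ∫ f dQ^N ≤ 1 for every probability measure Q on Z, then there exist measurable g, h : Ω → [0,∞] such that: (i) ∫ g dP ≤ 1 for every exchangeable probability measure P on Ω; (ii) h is symmetric (invariant under coordinate permutations) and ∫ h dQ^N ≤ 1 for every probability measure Q on Z; (iii) for every probability measure Q on Z, f(ω) = g(ω)·h(ω) for Q^N-almost every ω. Moreover one can take h(ω) = (1/N!) Σ_π f(ω∘π), the average of f over all permutations π of {1,…,N}, and g = f/h (with 0/0 := 0). -/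

import Mathlib

open MeasureTheory
open scoped ENNReal

lemma lintegral_perm_pi {Z : Type*} [MeasurableSpace Z] {N : ℕ} (Q : Measure Z) [SigmaFinite Q]
    (π : Equiv.Perm (Fin N)) {F : (Fin N → Z) → ℝ≥0∞} (hF : Measurable F) :
    ∫⁻ ω, F (fun i => ω (π i)) ∂(Measure.pi fun _ : Fin N => Q)
      = ∫⁻ ω, F ω ∂(Measure.pi fun _ : Fin N => Q) := by
  have hmp := measurePreserving_piCongrLeft (fun _ : Fin N => Q) π.symm
  have heq : ∀ ω : Fin N → Z,
      (MeasurableEquiv.piCongrLeft (fun _ : Fin N => Z) π.symm) ω = fun i => ω (π i) := by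
    intro ω
    funext j
    have h1 := Equiv.piCongrLeft_apply_apply (fun _ : Fin N => Z) π.symm ω (π j)
    have h2 : (MeasurableEquiv.piCongrLeft (fun _ : Fin N => Z) π.symm) ω j
        = (Equiv.piCongrLeft (fun _ : Fin N => Z) π.symm) ω j := rfl
    rw [h2]
    simpa using h1
  calc ∫⁻ ω, F (fun i => ω (π i)) ∂(Measure.pi fun _ : Fin N => Q)
      = ∫⁻ ω, F ((MeasurableEquiv.piCongrLeft (fun _ : Fin N => Z) π.symm) ω)
          ∂(Measure.pi fun _ : Fin N => Q) := by simp_rw [heq]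
    _ = _ := hmp.lintegral_comp hF

/-- let `Ω = Z^N`. If `f` is an e-function w.r.t. every IID measure
`Q^N`, then there are a measurable `g` that is an e-function w.r.t. every
exchangeable probability measure on `Ω` and a measurable symmetric `h` that is an
e-function w.r.t. every IID measure, such that `f = g·h` `Q^N`-a.e. for every `Q`;
moreover one can take `h(ω) = (1/N!) Σ_π f(ω∘π)` and `g = f/h` (`0/0 = 0` in `ℝ≥0∞`). -/
theorem stmt12 {Z : Type*} [MeasurableSpace Z] (N : ℕ) (hN : 1 ≤ N)
    (f : (Fin N → Z) → ℝ≥0∞) (hf : Measurable f)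
    (hfE : ∀ (Q : Measure Z) [IsProbabilityMeasure Q],
      ∫⁻ ω, f ω ∂(Measure.pi fun _ : Fin N => Q) ≤ 1) :
    ∃ g h : (Fin N → Z) → ℝ≥0∞,
      Measurable g ∧
      (∀ (P : Measure (Fin N → Z)) [IsProbabilityMeasure P],
        (∀ π : Equiv.Perm (Fin N), P.map (fun ω i => ω (π i)) = P) →
        ∫⁻ ω, g ω ∂P ≤ 1) ∧
      Measurable h ∧
      (∀ (π : Equiv.Perm (Fin N)) (ω : Fin N → Z), h (fun i => ω (π i)) = h ω) ∧
      (∀ (Q : Measure Z) [IsProbabilityMeasure Q],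
        ∫⁻ ω, h ω ∂(Measure.pi fun _ : Fin N => Q) ≤ 1) ∧
      (∀ (Q : Measure Z) [IsProbabilityMeasure Q],
        ∀ᵐ ω ∂(Measure.pi fun _ : Fin N => Q), f ω = g ω * h ω) ∧
      h = (fun ω => (N.factorial : ℝ≥0∞)⁻¹ *
        ∑ π : Equiv.Perm (Fin N), f (fun i => ω (π i))) ∧
      g = (fun ω => f ω / h ω) := by
  -- basic facts
  have hfac0 : (N.factorial : ℝ≥0∞) ≠ 0 := by
    exact_mod_cast Nat.cast_ne_zero.mpr N.factorial_ne_zero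
  have hfacT : (N.factorial : ℝ≥0∞) ≠ ⊤ := ENNReal.natCast_ne_top _
  set h : (Fin N → Z) → ℝ≥0∞ := fun ω => (N.factorial : ℝ≥0∞)⁻¹ *
      ∑ π : Equiv.Perm (Fin N), f (fun i => ω (π i)) with hh
  set g : (Fin N → Z) → ℝ≥0∞ := fun ω => f ω / h ω with hg
  -- measurability of the permuted maps
  have hperm : ∀ π : Equiv.Perm (Fin N),
      Measurable (fun ω : Fin N → Z => fun i => ω (π i)) := fun π =>
    measurable_pi_lambda _ fun i => measurable_pi_apply _
  have hm1 : ∀ π : Equiv.Perm (Fin N),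
      Measurable fun ω : Fin N → Z => f fun i => ω (π i) :=
    fun π => hf.comp (hperm π)
  have hmh : Measurable h := by
    apply Measurable.const_mul
    exact Finset.measurable_sum _ fun π _ => hm1 π
  have hmg : Measurable g := hf.div hmh
  -- symmetry of h
  have hsym : ∀ (π : Equiv.Perm (Fin N)) (ω : Fin N → Z), h (fun i => ω (π i)) = h ω := by
    intro σ ω
    simp only [hh]
    congr 1
    exact Fintype.sum_equiv (Equiv.mulLeft σ) _ _ (fun π => by
      simp [Equiv.Perm.mul_apply])
  -- pointwise: f ≤ N! * h
  have hfh : ∀ ω, f ω ≤ (N.factorial : ℝ≥0∞) * h ω := by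
    intro ω
    have h1 : f ω ≤ ∑ π : Equiv.Perm (Fin N), f (fun i => ω (π i)) := by
      have := Finset.single_le_sum (f := fun π : Equiv.Perm (Fin N) => f (fun i => ω (π i)))
        (fun π _ => zero_le) (Finset.mem_univ (1 : Equiv.Perm (Fin N)))
      simpa using this
    calc f ω ≤ ∑ π : Equiv.Perm (Fin N), f (fun i => ω (π i)) := h1
      _ = (N.factorial : ℝ≥0∞) * h ω := by
          rw [hh]; rw [← mul_assoc, ENNReal.mul_inv_cancel hfac0 hfacT, one_mul]
  -- integral of h w.r.t. IID measures
  have hhE : ∀ (Q : Measure Z) [IsProbabilityMeasure Q],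
      ∫⁻ ω, h ω ∂(Measure.pi fun _ : Fin N => Q) ≤ 1 := by
    intro Q _
    rw [hh]
    simp only
    have hmsum : Measurable fun ω : Fin N → Z =>
        ∑ π : Equiv.Perm (Fin N), f fun i => ω (π i) :=
      Finset.measurable_sum _ fun π _ => hm1 π
    rw [lintegral_const_mul _ hmsum]
    rw [lintegral_finset_sum _ (fun π _ => hm1 π)]
    have : ∀ π : Equiv.Perm (Fin N),
        ∫⁻ ω, f (fun i => ω (π i)) ∂(Measure.pi fun _ : Fin N => Q)
          = ∫⁻ ω, f ω ∂(Measure.pi fun _ : Fin N => Q) := fun π =>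
      lintegral_perm_pi Q π hf
    simp_rw [this]
    rw [Finset.sum_const, Finset.card_univ]
    have hcard : (Fintype.card (Equiv.Perm (Fin N)) : ℝ≥0∞) = (N.factorial : ℝ≥0∞) := by
      rw [Fintype.card_perm, Fintype.card_fin]
    rw [nsmul_eq_mul, hcard, ← mul_assoc, ENNReal.inv_mul_cancel hfac0 hfacT, one_mul]
    exact hfE Q
  -- pointwise: symmetrized g ≤ 1
  have hgsum : ∀ ω : Fin N → Z,
      (N.factorial : ℝ≥0∞)⁻¹ * ∑ π : Equiv.Perm (Fin N), g (fun i => ω (π i)) ≤ 1 := by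
    intro ω
    have : ∀ π : Equiv.Perm (Fin N), g (fun i => ω (π i))
        = f (fun i => ω (π i)) / h ω := by
      intro π; rw [hg]; simp only; rw [hsym]
    calc (N.factorial : ℝ≥0∞)⁻¹ * ∑ π : Equiv.Perm (Fin N), g (fun i => ω (π i))
        = (N.factorial : ℝ≥0∞)⁻¹ * ∑ π : Equiv.Perm (Fin N),
            (f (fun i => ω (π i)) * (h ω)⁻¹) := by simp_rw [this, div_eq_mul_inv]
      _ = (N.factorial : ℝ≥0∞)⁻¹ *
            ((∑ π : Equiv.Perm (Fin N), f fun i => ω (π i)) * (h ω)⁻¹) := by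
          rw [Finset.sum_mul]
      _ = h ω * (h ω)⁻¹ := by rw [← mul_assoc]
      _ ≤ 1 := ENNReal.mul_inv_le_one _
  -- integral of g w.r.t. exchangeable measures
  have hcard : (Fintype.card (Equiv.Perm (Fin N)) : ℝ≥0∞) = (N.factorial : ℝ≥0∞) := by
    rw [Fintype.card_perm, Fintype.card_fin]
  have hm2 : ∀ π : Equiv.Perm (Fin N),
      Measurable fun ω : Fin N → Z => g fun i => ω (π i) :=
    fun π => hmg.comp (hperm π)
  have hgE : ∀ (P : Measure (Fin N → Z)) [IsProbabilityMeasure P],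
      (∀ π : Equiv.Perm (Fin N), P.map (fun ω i => ω (π i)) = P) →
      ∫⁻ ω, g ω ∂P ≤ 1 := by
    intro P _ hP
    have key : ∫⁻ ω, g ω ∂P
        = ∫⁻ ω, (N.factorial : ℝ≥0∞)⁻¹ *
            ∑ π : Equiv.Perm (Fin N), g (fun i => ω (π i)) ∂P := by
      have hmsum : Measurable fun ω : Fin N → Z =>
          ∑ π : Equiv.Perm (Fin N), g fun i => ω (π i) :=
        Finset.measurable_sum _ fun π _ => hm2 π
      rw [lintegral_const_mul _ hmsum, lintegral_finset_sum _ (fun π _ => hm2 π)]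
      have heach : ∀ π : Equiv.Perm (Fin N),
          ∫⁻ ω, g (fun i => ω (π i)) ∂P = ∫⁻ ω, g ω ∂P := by
        intro π
        rw [← lintegral_map hmg (hperm π), hP π]
      simp_rw [heach]
      rw [Finset.sum_const, Finset.card_univ, nsmul_eq_mul, hcard, ← mul_assoc,
        ENNReal.inv_mul_cancel hfac0 hfacT, one_mul]
    rw [key]
    calc ∫⁻ ω, (N.factorial : ℝ≥0∞)⁻¹ *
            ∑ π : Equiv.Perm (Fin N), g (fun i => ω (π i)) ∂P
        ≤ ∫⁻ _, 1 ∂P := lintegral_mono fun ω => hgsum ω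
      _ = 1 := by simp
  -- a.e. factorization
  have haefactor : ∀ (Q : Measure Z) [IsProbabilityMeasure Q],
      ∀ᵐ ω ∂(Measure.pi fun _ : Fin N => Q), f ω = g ω * h ω := by
    intro Q _
    have hlt : ∀ᵐ ω ∂(Measure.pi fun _ : Fin N => Q), h ω < ⊤ :=
      ae_lt_top hmh (ne_top_of_le_ne_top ENNReal.one_ne_top (hhE Q))
    filter_upwards [hlt] with ω hω
    by_cases h0 : h ω = 0
    · have hf0 : f ω = 0 := by
        have := hfh ω
        rw [h0, mul_zero] at this
        exact le_antisymm this zero_le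
      rw [hf0, h0, mul_zero]
    · rw [hg]
      simp only
      rw [ENNReal.div_mul_cancel h0 hω.ne]
  exact ⟨g, h, hmg, hgE, hmh, hsym, hhE, haefactor, hh, hg⟩
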